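/- For every countable ordinal α, I_ω is weak Rudin–Keisler reducible to I_{ω^{α+1}}: I_ω ≤_wRK I_{ω^{α+1}}. -/

import Mathlib

/-- `Ialpha α`: sets of binary strings admitting an order-reversing map into `α`,
i.e. `f t < f s` whenever `s` is a proper prefix of `t` (both in `X`). -/
def Ialpha (α : Ordinal) : Set (Set (List Bool)) :=
  {X | ∃ f : List Bool → Ordinal, (∀ s ∈ X, f s < α) ∧
    ∀ s ∈ X, ∀ t ∈ X, s <+: t → s ≠ t → f t < f s}

/-- Weak Rudin–Keisler reducibility: there is an infinite `B' ⊆ B` and `f : B' → A`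
such that `X ∈ I ↔ f⁻¹[X] ∈ J` for all `X ⊆ A`. -/
def wRK {A B : Type*} (I : Set (Set A)) (J : Set (Set B)) : Prop :=
  ∃ (B' : Set B) (f : B' → A), B'.Infinite ∧
    ∀ X : Set A, X ∈ I ↔ (Subtype.val '' (f ⁻¹' X)) ∈ J

namespace IWRK
universe u

/-- double each bit -/
def dbl (s : List Bool) : List Bool := s.flatMap fun b => [b, b]

/-- one segment of the blow-up code: a doubled attachment point, a separator `01`,
and a doubled direction bit -/
def seg (q : List Bool) (b : Bool) : List Bool := dbl q ++ false :: true :: b :: b :: []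

/-- encoding of a blown-up tree element -/
def enc (l : List (List Bool × Bool)) (p : List Bool) : List Bool :=
  (l.flatMap fun qb => seg qb.1 qb.2) ++ dbl p

@[simp] theorem dbl_nil : dbl [] = [] := rfl
@[simp] theorem dbl_cons (b : Bool) (s : List Bool) : dbl (b :: s) = b :: b :: dbl s := rfl

theorem dbl_append (s t : List Bool) : dbl (s ++ t) = dbl s ++ dbl t := by
  simp [dbl]

theorem dbl_prefix {s t : List Bool} (h : s <+: t) : dbl s <+: dbl t := by
  obtain ⟨u, rfl⟩ := h
  rw [dbl_append]; exact List.prefix_append _ _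

theorem prefix_of_dbl_prefix : ∀ {s t : List Bool}, dbl s <+: dbl t → s <+: t := by
  intro s
  induction s with
  | nil => intro t _; exact List.nil_prefix
  | cons a s ih =>
    intro t h
    cases t with
    | nil =>
      simp only [dbl_cons, dbl_nil] at h
      exact absurd (List.prefix_nil.mp h) (by simp)
    | cons b t =>
      simp only [dbl_cons, List.cons_prefix_cons] at h
      obtain ⟨rfl, -, h⟩ := h
      exact (List.cons_prefix_cons).mpr ⟨rfl, ih h⟩

theorem dbl_injective : Function.Injective dbl := by
  intro s t h
  have h1 : dbl s <+: dbl t := h ▸ List.prefix_refl _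
  have h2 : dbl t <+: dbl s := h ▸ List.prefix_refl _
  exact (prefix_of_dbl_prefix h1).eq_of_length
    (le_antisymm (prefix_of_dbl_prefix h1).length_le (prefix_of_dbl_prefix h2).length_le)

theorem parse_pre : ∀ {q q' : List Bool} {u v : List Bool},
    (dbl q ++ false :: true :: u) <+: (dbl q' ++ false :: true :: v) → q = q' ∧ u <+: v := by
  intro q
  induction q with
  | nil =>
    intro q' u v h
    cases q' with
    | nil => simpa using h
    | cons b q'' =>
      simp only [dbl_nil, dbl_cons, List.nil_append, List.cons_append,
        List.cons_prefix_cons] at h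
      obtain ⟨rfl, h, -⟩ := h
      simp at h
  | cons a q₂ ih =>
    intro q' u v h
    cases q' with
    | nil =>
      simp only [dbl_nil, dbl_cons, List.nil_append, List.cons_append,
        List.cons_prefix_cons] at h
      obtain ⟨rfl, h, -⟩ := h
      simp at h
    | cons b q₂' =>
      simp only [dbl_cons, List.cons_append, List.cons_prefix_cons] at h
      obtain ⟨rfl, -, h⟩ := h
      obtain ⟨rfl, h'⟩ := ih h
      exact ⟨rfl, h'⟩

theorem parse_not_pre : ∀ {q q' : List Bool} {u : List Bool},
    ¬ (dbl q ++ false :: true :: u) <+: dbl q' := by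
  intro q
  induction q with
  | nil =>
    intro q' u h
    cases q' with
    | nil => simp at h
    | cons b q'' =>
      simp only [dbl_nil, dbl_cons, List.nil_append, List.cons_prefix_cons] at h
      obtain ⟨rfl, h, -⟩ := h
      simp at h
  | cons a q₂ ih =>
    intro q' u h
    cases q' with
    | nil =>
      simp only [dbl_cons, dbl_nil, List.cons_append] at h
      exact absurd (List.prefix_nil.mp h) (by simp)
    | cons b q₂' =>
      simp only [dbl_cons, List.cons_append, List.cons_prefix_cons] at h
      obtain ⟨rfl, -, h⟩ := h
      exact ih h

theorem parse_eq {q q' u v : List Bool}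
    (h : dbl q ++ false :: true :: u = dbl q' ++ false :: true :: v) : q = q' ∧ u = v := by
  have hp : (dbl q ++ false :: true :: u) <+: (dbl q' ++ false :: true :: v) := h ▸ List.prefix_refl _
  obtain ⟨rfl, h1⟩ := parse_pre hp
  refine ⟨rfl, ?_⟩
  have := List.append_cancel_left h
  simpa using this

@[simp] theorem enc_nil (p : List Bool) : enc [] p = dbl p := rfl

theorem enc_cons (q : List Bool) (b : Bool) (l : List (List Bool × Bool)) (p : List Bool) :
    enc ((q, b) :: l) p = dbl q ++ false :: true :: b :: b :: enc l p := by
  simp [enc, seg]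

theorem enc_injective : ∀ {l l' : List (List Bool × Bool)} {p p' : List Bool},
    enc l p = enc l' p' → l = l' ∧ p = p' := by
  intro l
  induction l with
  | nil =>
    intro l' p p' h
    cases l' with
    | nil => exact ⟨rfl, dbl_injective h⟩
    | cons qb l₂ =>
      obtain ⟨q, b⟩ := qb
      rw [enc_nil, enc_cons] at h
      exact absurd (h ▸ List.prefix_refl (dbl p) : dbl q ++ false :: true :: (b :: b :: enc l₂ p') <+: dbl p)
        parse_not_pre
  | cons qb l₂ ih =>
    obtain ⟨q, b⟩ := qb
    intro l' p p' h
    cases l' with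
    | nil =>
      rw [enc_nil, enc_cons] at h
      exact absurd (h ▸ List.prefix_refl _ : dbl q ++ false :: true :: (b :: b :: enc l₂ p) <+: dbl p')
        parse_not_pre
    | cons qb' l₂' =>
      obtain ⟨q', b'⟩ := qb'
      rw [enc_cons, enc_cons] at h
      obtain ⟨rfl, h2⟩ := parse_eq h
      obtain ⟨rfl, h3⟩ : b = b' ∧ enc l₂ p = enc l₂' p' := by
        simpa using h2
      obtain ⟨rfl, rfl⟩ := ih h3
      exact ⟨rfl, rfl⟩

theorem enc_prefix : ∀ {l l' : List (List Bool × Bool)} {p p' : List Bool},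
    enc l p <+: enc l' p' → l <+: l' ∧ (l = l' → p <+: p') := by
  intro l
  induction l with
  | nil =>
    intro l' p p' h
    refine ⟨List.nil_prefix, fun e => ?_⟩
    subst e
    exact prefix_of_dbl_prefix (by simpa using h)
  | cons qb l₂ ih =>
    obtain ⟨q, b⟩ := qb
    intro l' p p' h
    cases l' with
    | nil =>
      rw [enc_cons, enc_nil] at h
      exact absurd h parse_not_pre
    | cons qb' l₂' =>
      obtain ⟨q', b'⟩ := qb'
      rw [enc_cons, enc_cons] at h
      obtain ⟨rfl, h2⟩ := parse_pre h
      obtain ⟨rfl, h3⟩ : b = b' ∧ enc l₂ p <+: enc l₂' p' := by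
        rw [List.cons_prefix_cons, List.cons_prefix_cons] at h2
        exact ⟨h2.1, h2.2.2⟩
      obtain ⟨h4, h5⟩ := ih h3
      refine ⟨List.cons_prefix_cons.mpr ⟨rfl, h4⟩, fun e => h5 (by simpa using e)⟩

theorem enc_prefix_append (l l₂ : List (List Bool × Bool)) (p r : List Bool) (b : Bool) :
    enc l p <+: enc (l ++ (p, b) :: l₂) r := by
  refine ⟨false :: true :: b :: b :: ((l₂.flatMap fun qb => seg qb.1 qb.2) ++ dbl r), ?_⟩
  simp [enc, seg]

theorem enc_ne_append (l l₂ : List (List Bool × Bool)) (p r : List Bool) (b : Bool) :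
    enc l p ≠ enc (l ++ (p, b) :: l₂) r := by
  intro h
  have := (enc_injective h).1
  have := congrArg List.length this
  simp at this

theorem enc_prefix_of_snd {r r' : List Bool} (l : List (List Bool × Bool)) (h : r <+: r') :
    enc l r <+: enc l r' := by
  unfold enc
  exact (List.prefix_append_right_inj _).mpr (dbl_prefix h)

theorem enc_ne_of_snd {r r' : List Bool} (l : List (List Bool × Bool)) (h : r ≠ r') :
    enc l r ≠ enc l r' := fun e => h (enc_injective e).2

/-- code a list over a countable index type as a binary string, each element as a
block `0^(ι x) 1` -/
def codeN {σ : Type*} (ι : σ → ℕ) (m : List σ) : List Bool :=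
  m.flatMap fun x => List.replicate (ι x) false ++ [true]

theorem codeN_append {σ : Type*} (ι : σ → ℕ) (m m' : List σ) :
    codeN ι (m ++ m') = codeN ι m ++ codeN ι m' := by simp [codeN]

theorem codeN_nonnil {σ : Type*} (ι : σ → ℕ) {m : List σ} (hm : m ≠ []) :
    codeN ι m ≠ [] := by
  cases m with
  | nil => exact absurd rfl hm
  | cons x m' => simp [codeN]

theorem rep_parse : ∀ {a b : ℕ} {u v : List Bool},
    (List.replicate a false ++ true :: u) <+: (List.replicate b false ++ true :: v) →
      a = b ∧ u <+: v := by
  intro a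
  induction a with
  | zero =>
    intro b u v h
    cases b with
    | zero => simpa using h
    | succ b' =>
      simp only [List.replicate_zero, List.nil_append, List.replicate_succ,
        List.cons_append, List.cons_prefix_cons] at h
      simp at h
  | succ a' ih =>
    intro b u v h
    cases b with
    | zero =>
      simp only [List.replicate_zero, List.nil_append, List.replicate_succ,
        List.cons_append, List.cons_prefix_cons] at h
      simp at h
    | succ b' =>
      simp only [List.replicate_succ, List.cons_append, List.cons_prefix_cons] at h
      obtain ⟨-, h⟩ := h
      obtain ⟨rfl, h'⟩ := ih h
      exact ⟨rfl, h'⟩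

theorem codeN_prefix {σ : Type*} {ι : σ → ℕ} (hι : Function.Injective ι) :
    ∀ {m m' : List σ}, codeN ι m <+: codeN ι m' → m <+: m' := by
  intro m
  induction m with
  | nil => intro m' _; exact List.nil_prefix
  | cons x m₂ ih =>
    intro m' h
    cases m' with
    | nil =>
      have : codeN ι (x :: m₂) = [] := List.prefix_nil.mp h
      exact absurd this (codeN_nonnil ι (by simp))
    | cons y m₂' =>
      have h' : (List.replicate (ι x) false ++ true :: codeN ι m₂) <+:
          (List.replicate (ι y) false ++ true :: codeN ι m₂') := by
        simpa [codeN] using h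
      obtain ⟨he, h2⟩ := rep_parse h'
      obtain rfl := hι he
      exact List.cons_prefix_cons.mpr ⟨rfl, ih h2⟩

theorem codeN_injective {σ : Type*} {ι : σ → ℕ} (hι : Function.Injective ι) :
    Function.Injective (codeN ι) := by
  intro m m' h
  have h1 : m <+: m' := codeN_prefix hι (h ▸ List.prefix_refl _)
  have h2 : m' <+: m := codeN_prefix hι (h ▸ List.prefix_refl _)
  exact h1.eq_of_length (le_antisymm h1.length_le h2.length_le)

/-- the fiber tree: codes of nonempty strictly decreasing sequences of ordinals `< o` -/
def FF (o : Ordinal) (ι : ↥(Set.Iio o) → ℕ) : Set (List Bool) :=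
  {p | ∃ m : List ↥(Set.Iio o), m ≠ [] ∧ List.Chain' (· > ·) m ∧ p = codeN ι m}

open Classical in
/-- the rank witness on `FF`: the last ordinal in the coded sequence -/
noncomputable def rhoF (o : Ordinal) (ι : ↥(Set.Iio o) → ℕ) : List Bool → Ordinal :=
  fun p => if h : ∃ m : List ↥(Set.Iio o), m ≠ [] ∧ List.Chain' (· > ·) m ∧ p = codeN ι m
    then ((h.choose).getLast h.choose_spec.1).val else 0

theorem rhoF_eval {o : Ordinal} {ι : ↥(Set.Iio o) → ℕ} (hι : Function.Injective ι)
    {m : List ↥(Set.Iio o)} (hm : m ≠ []) (hc : List.Chain' (· > ·) m) :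
    rhoF o ι (codeN ι m) = (m.getLast hm).val := by
  have h : ∃ m' : List ↥(Set.Iio o), m' ≠ [] ∧ List.Chain' (· > ·) m' ∧
      codeN ι m = codeN ι m' := ⟨m, hm, hc, rfl⟩
  classical
  rw [rhoF, dif_pos h]
  have he : h.choose = m := codeN_injective hι h.choose_spec.2.2.symm
  have h1 : h.choose.getLast? = m.getLast? := by rw [he]
  rw [List.getLast?_eq_getLast h.choose_spec.1, List.getLast?_eq_getLast hm] at h1
  exact congrArg Subtype.val (Option.some.inj h1)

theorem rhoF_lt {o : Ordinal} {ι : ↥(Set.Iio o) → ℕ} (hι : Function.Injective ι)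
    {p : List Bool} (hp : p ∈ FF o ι) : rhoF o ι p < o := by
  obtain ⟨m, hm, hc, rfl⟩ := hp
  rw [rhoF_eval hι hm hc]
  exact (m.getLast hm).2

theorem rhoF_dec {o : Ordinal} {ι : ↥(Set.Iio o) → ℕ} (hι : Function.Injective ι)
    {p p' : List Bool} (hp : p ∈ FF o ι) (hp' : p' ∈ FF o ι)
    (hpre : p <+: p') (hne : p ≠ p') : rhoF o ι p' < rhoF o ι p := by
  obtain ⟨m, hm, hc, rfl⟩ := hp
  obtain ⟨m', hm', hc', rfl⟩ := hp'
  obtain ⟨k, rfl⟩ := codeN_prefix hι hpre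
  have hk : k ≠ [] := by
    rintro rfl
    exact hne (by simp)
  rw [rhoF_eval hι hm hc, rhoF_eval hι hm' hc']
  have hglast : (m ++ k).getLast hm' = k.getLast hk := List.getLast_append_of_ne_nil hm' hk
  rw [hglast]
  have hpw : List.Pairwise (· > ·) (m ++ k) := List.isChain_iff_pairwise.mp hc'
  have : m.getLast hm > k.getLast hk := by
    rw [List.pairwise_append] at hpw
    exact hpw.2.2 _ (List.getLast_mem hm) _ (List.getLast_mem hk)
  exact_mod_cast this

theorem FF_hard {o : Ordinal} {ι : ↥(Set.Iio o) → ℕ} (hι : Function.Injective ι)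
    (g : List Bool → Ordinal)
    (hg : ∀ p ∈ FF o ι, ∀ p' ∈ FF o ι, p <+: p' → p ≠ p' → g p' < g p) :
    ∀ γ < o, ∃ p ∈ FF o ι, γ ≤ g p := by
  have claim : ∀ γ : Ordinal, ∀ (hγ : γ < o) (m : List ↥(Set.Iio o)),
      List.Chain' (· > ·) (m ++ [⟨γ, hγ⟩]) → γ ≤ g (codeN ι (m ++ [⟨γ, hγ⟩])) := by
    intro γ
    induction γ using Ordinal.induction with
    | h γ IH =>
      intro hγ m hc
      by_contra hlt
      push_neg at hlt
      set δ := g (codeN ι (m ++ [⟨γ, hγ⟩])) with hδ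
      have hδo : δ < o := lt_trans hlt hγ
      have hc2 : List.Chain' (· > ·) ((m ++ [⟨γ, hγ⟩]) ++ [⟨δ, hδo⟩]) := by
        unfold List.Chain'
        rw [List.isChain_append]
        refine ⟨hc, List.isChain_singleton _, ?_⟩
        intro x hx y hy
        simp only [List.getLast?_concat, Option.mem_def, Option.some_inj] at hx
        simp only [List.head?_cons, Option.mem_def, Option.some_inj] at hy
        subst hx; subst hy
        exact hlt
      have h1 := IH δ hlt hδo (m ++ [⟨γ, hγ⟩]) hc2
      have hmem1 : codeN ι (m ++ [⟨γ, hγ⟩]) ∈ FF o ι :=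
        ⟨_, by simp, hc, rfl⟩
      have hmem2 : codeN ι ((m ++ [⟨γ, hγ⟩]) ++ [⟨δ, hδo⟩]) ∈ FF o ι :=
        ⟨_, by simp, hc2, rfl⟩
      have hpre : codeN ι (m ++ [⟨γ, hγ⟩]) <+: codeN ι ((m ++ [⟨γ, hγ⟩]) ++ [⟨δ, hδo⟩]) := by
        have he : codeN ι ((m ++ [⟨γ, hγ⟩]) ++ [⟨δ, hδo⟩]) =
            codeN ι (m ++ [⟨γ, hγ⟩]) ++ codeN ι [⟨δ, hδo⟩] := codeN_append _ _ _
        rw [he]; exact List.prefix_append _ _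
      have hne : codeN ι (m ++ [⟨γ, hγ⟩]) ≠ codeN ι ((m ++ [⟨γ, hγ⟩]) ++ [⟨δ, hδo⟩]) := by
        intro he
        have := codeN_injective hι he
        have := congrArg List.length this
        simp at this
      have h2 := hg _ hmem1 _ hmem2 hpre hne
      exact absurd (lt_of_le_of_lt h1 h2) (lt_irrefl _)
  intro γ hγ
  refine ⟨codeN ι [⟨γ, hγ⟩], ⟨_, by simp, List.isChain_singleton _, rfl⟩, ?_⟩
  have := claim γ hγ [] (List.isChain_singleton _)
  simpa using this

/-- chains of proper extensions inside `X` below `s` -/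
def Below (X : Set (List Bool)) : ℕ → List Bool → Prop
  | 0, _ => True
  | j+1, s => ∃ t, s <+: t ∧ s ≠ t ∧ t ∈ X ∧ Below X j t

/-- the blown-up tree: all encodings with attachment data in `F` -/
def BSet (F : Set (List Bool)) : Set (List Bool) :=
  {u | ∃ (l : List (List Bool × Bool)) (p : List Bool),
    (∀ qb ∈ l, qb.1 ∈ F) ∧ p ∈ F ∧ u = enc l p}

/-- the reduction map: decode the direction bits -/
noncomputable def fMap (F : Set (List Bool)) (x : ↥(BSet F)) : List Bool :=
  (x.2 : ∃ (l : List (List Bool × Bool)) (p : List Bool),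
    (∀ qb ∈ l, qb.1 ∈ F) ∧ p ∈ F ∧ x.val = enc l p).choose.map Prod.snd

theorem fMap_eval (F : Set (List Bool)) {l : List (List Bool × Bool)} {p : List Bool}
    (hx : (enc l p) ∈ BSet F) : fMap F ⟨enc l p, hx⟩ = l.map Prod.snd := by
  unfold fMap
  generalize_proofs h
  obtain ⟨p', h1, h2, h3⟩ := h.choose_spec
  exact (congrArg (List.map Prod.snd) (enc_injective h3).1.symm)

/-- the preimage of `X` in the blown-up tree -/
def EncSet (F : Set (List Bool)) (X : Set (List Bool)) : Set (List Bool) :=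
  {u | ∃ (l : List (List Bool × Bool)) (p : List Bool),
    (∀ qb ∈ l, qb.1 ∈ F) ∧ p ∈ F ∧ l.map Prod.snd ∈ X ∧ u = enc l p}

theorem image_preimage (F : Set (List Bool)) (X : Set (List Bool)) :
    Subtype.val '' ((fMap F) ⁻¹' X) = EncSet F X := by
  ext u
  constructor
  · rintro ⟨x, hx, rfl⟩
    obtain ⟨l, p, h1, h2, h3⟩ := (x.2 : ∃ (l : List (List Bool × Bool)) (p : List Bool),
      (∀ qb ∈ l, qb.1 ∈ F) ∧ p ∈ F ∧ x.val = enc l p)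
    rw [Set.mem_preimage] at hx
    have hxe : x = ⟨enc l p, h3 ▸ x.2⟩ := Subtype.ext h3
    rw [hxe, fMap_eval] at hx
    exact ⟨l, p, h1, h2, hx, h3⟩
  · rintro ⟨l, p, h1, h2, h3, rfl⟩
    have hm : enc l p ∈ BSet F := ⟨l, p, h1, h2, rfl⟩
    refine ⟨⟨enc l p, hm⟩, ?_, rfl⟩
    rw [Set.mem_preimage, fMap_eval F hm]
    exact h3

theorem BSet_infinite (F : Set (List Bool)) (q0 : List Bool) (hq0 : q0 ∈ F) :
    (BSet F).Infinite := by
  refine Set.infinite_of_injective_forall_mem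
    (f := fun n : ℕ => enc (List.replicate n (q0, false)) q0) ?_ ?_
  · intro n n' h
    have := (enc_injective h).1
    have := congrArg List.length this
    simpa using this
  · intro n
    refine ⟨List.replicate n (q0, false), q0, ?_, hq0, rfl⟩
    intro qb hqb
    rw [List.eq_of_mem_replicate hqb]
    exact hq0

theorem forward (o : Ordinal.{u}) (F : Set (List Bool))
    (ρ : List Bool → Ordinal.{u}) (hρlt : ∀ p ∈ F, ρ p < o)
    (hρdec : ∀ p ∈ F, ∀ p' ∈ F, p <+: p' → p ≠ p' → ρ p' < ρ p)
    (X : Set (List Bool)) (hX : X ∈ Ialpha.{u} Ordinal.omega0) :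
    EncSet F X ∈ Ialpha.{u} (o * Ordinal.omega0) := by
  classical
  obtain ⟨v, hv1, hv2⟩ := hX
  set H : List Bool → Ordinal := fun u =>
    if h : ∃ (l : List (List Bool × Bool)) (p : List Bool),
        (∀ qb ∈ l, qb.1 ∈ F) ∧ p ∈ F ∧ u = enc l p
    then o * v (h.choose.map Prod.snd) + ρ h.choose_spec.choose else 0 with hH
  have Heval : ∀ (l : List (List Bool × Bool)) (p : List Bool),
      (∀ qb ∈ l, qb.1 ∈ F) → p ∈ F →
      H (enc l p) = o * v (l.map Prod.snd) + ρ p := by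
    intro l p hl hp
    have h : ∃ (l' : List (List Bool × Bool)) (p' : List Bool),
        (∀ qb ∈ l', qb.1 ∈ F) ∧ p' ∈ F ∧ enc l p = enc l' p' := ⟨l, p, hl, hp, rfl⟩
    rw [hH]
    simp only
    rw [dif_pos h]
    obtain ⟨h1, h2, h3⟩ := h.choose_spec.choose_spec
    obtain ⟨he1, he2⟩ := enc_injective h3
    exact congrArg₂ (· + ·) (congrArg (fun z => o * v (List.map Prod.snd z)) he1.symm)
      (congrArg ρ he2.symm)
  refine ⟨H, ?_, ?_⟩
  · rintro u ⟨l, p, hl, hp, hXt, rfl⟩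
    rw [Heval l p hl hp]
    have h3 : v (l.map Prod.snd) + 1 ≤ Ordinal.omega0 :=
      Order.add_one_le_iff.mpr (hv1 _ hXt)
    calc o * v (l.map Prod.snd) + ρ p
        < o * v (l.map Prod.snd) + o := add_lt_add_right (hρlt p hp) _
      _ = o * (v (l.map Prod.snd) + 1) := by rw [mul_add, mul_one]
      _ ≤ o * Ordinal.omega0 := mul_le_mul_right h3 o
  · rintro u ⟨l, p, hl, hp, hXt, rfl⟩ u' ⟨l', p', hl', hp', hXt', rfl⟩ hpre hne
    rw [Heval l p hl hp, Heval l' p' hl' hp']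
    obtain ⟨hll, heq⟩ := enc_prefix hpre
    by_cases hll2 : l = l'
    · subst hll2
      have hpp : p <+: p' := heq rfl
      have hppne : p ≠ p' := fun e => hne (by rw [e])
      exact add_lt_add_right (hρdec p hp p' hp' hpp hppne) _
    · have hlen : l.length < l'.length :=
        lt_of_le_of_ne hll.length_le (fun e => hll2 (hll.eq_of_length e))
      have htpre : l.map Prod.snd <+: l'.map Prod.snd := hll.map _
      have htne : l.map Prod.snd ≠ l'.map Prod.snd := by
        intro e
        have := congrArg List.length e
        simp only [List.length_map] at this
        omega
      have hvlt : v (l'.map Prod.snd) < v (l.map Prod.snd) :=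
        hv2 _ hXt _ hXt' htpre htne
      have h2 : o * (v (l'.map Prod.snd) + 1) ≤ o * v (l.map Prod.snd) :=
        mul_le_mul_right (Order.add_one_le_iff.mpr hvlt) o
      calc o * v (l'.map Prod.snd) + ρ p'
          < o * v (l'.map Prod.snd) + o := add_lt_add_right (hρlt p' hp') _
        _ = o * (v (l'.map Prod.snd) + 1) := by rw [mul_add, mul_one]
        _ ≤ o * v (l.map Prod.snd) := h2
        _ ≤ o * v (l.map Prod.snd) + ρ p := le_self_add

theorem backward (o : Ordinal.{u}) (ho : o = 1 ∨ Order.IsSuccLimit o)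
    (F : Set (List Bool)) (q0 : List Bool) (hq0 : q0 ∈ F)
    (hhard : ∀ g : List Bool → Ordinal.{u},
      (∀ p ∈ F, ∀ p' ∈ F, p <+: p' → p ≠ p' → g p' < g p) →
      ∀ γ < o, ∃ p ∈ F, γ ≤ g p)
    (X : Set (List Bool)) (hX : EncSet F X ∈ Ialpha.{u} (o * Ordinal.omega0)) :
    X ∈ Ialpha.{u} Ordinal.omega0 := by
  classical
  obtain ⟨H, hH1, hH2⟩ := hX
  have ho0 : (0 : Ordinal.{u}) < o := by
    rcases ho with h | h
    · rw [h]; exact zero_lt_one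
    · exact h.bot_lt
  set E0 : List Bool → List Bool := fun s => enc (s.map fun b => (q0, b)) q0 with hE0
  have hE0valid : ∀ s : List Bool, ∀ qb ∈ (s.map fun b => (q0, b)),
      (qb : List Bool × Bool).1 ∈ F := by
    intro s qb hqb
    obtain ⟨b, -, rfl⟩ := List.mem_map.mp hqb
    exact hq0
  have hE0snd : ∀ s : List Bool, (s.map fun b => (q0, b)).map Prod.snd = s := by
    intro s
    rw [List.map_map]
    simp [Function.comp]
  have hE0mem : ∀ s ∈ X, E0 s ∈ EncSet F X := fun s hs =>
    ⟨_, q0, hE0valid s, hq0, by rw [hE0snd]; exact hs, rfl⟩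
  have claimD : ∀ (j : ℕ) (l : List (List Bool × Bool)) (p : List Bool),
      (∀ qb ∈ l, qb.1 ∈ F) → p ∈ F → l.map Prod.snd ∈ X →
      Below X j (l.map Prod.snd) → o * (j : Ordinal.{u}) ≤ H (enc l p) := by
    intro j
    induction j with
    | zero => intro l p _ _ _ _; simp
    | succ j ih =>
      intro l p hl hp hlX hbel
      obtain ⟨t', hpre, hne, ht'X, hbel'⟩ := hbel
      obtain ⟨d, hd⟩ := hpre
      have hdne : d ≠ [] := by
        rintro rfl
        exact hne (by simpa using hd)
      obtain ⟨b, w, rfl⟩ : ∃ b w, d = b :: w := by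
        cases d with
        | nil => exact absurd rfl hdne
        | cons b w => exact ⟨b, w, rfl⟩
      set l2 : List (List Bool × Bool) := l ++ (p, b) :: (w.map fun c => (q0, c)) with hl2
      have hl2valid : ∀ qb ∈ l2, qb.1 ∈ F := by
        intro qb hqb
        rw [hl2, List.mem_append, List.mem_cons] at hqb
        rcases hqb with h | h | h
        · exact hl qb h
        · rw [h]; exact hp
        · obtain ⟨c, -, rfl⟩ := List.mem_map.mp h
          exact hq0
      have hl2snd : l2.map Prod.snd = t' := by
        rw [← hd, hl2]
        simp [List.map_map, Function.comp]
      have hmem1 : enc l p ∈ EncSet F X := ⟨l, p, hl, hp, hlX, rfl⟩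
      have hmem2 : ∀ r ∈ F, enc l2 r ∈ EncSet F X := fun r hr =>
        ⟨l2, r, hl2valid, hr, by rw [hl2snd]; exact ht'X, rfl⟩
      have hkey : ∀ r ∈ F, o * (j : Ordinal.{u}) ≤ H (enc l2 r) ∧
          H (enc l2 r) < H (enc l p) := by
        intro r hr
        constructor
        · exact ih l2 r hl2valid hr (by rw [hl2snd]; exact ht'X) (by rw [hl2snd]; exact hbel')
        · exact hH2 _ hmem1 _ (hmem2 r hr) (enc_prefix_append l _ p r b) (enc_ne_append l _ p r b)
      have hstep : ∀ γ < o, o * (j : Ordinal.{u}) + γ < H (enc l p) := by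
        intro γ hγ
        set g : List Bool → Ordinal.{u} := fun r => H (enc l2 r) - o * (j : Ordinal.{u}) with hg
        have hgdec : ∀ r ∈ F, ∀ r' ∈ F, r <+: r' → r ≠ r' → g r' < g r := by
          intro r hr r' hr' hrr hner
          have h1 : H (enc l2 r') < H (enc l2 r) :=
            hH2 _ (hmem2 r hr) _ (hmem2 r' hr') (enc_prefix_of_snd l2 hrr) (enc_ne_of_snd l2 hner)
          have e1 : o * (j : Ordinal.{u}) + g r = H (enc l2 r) :=
            Ordinal.add_sub_cancel_of_le (hkey r hr).1
          have e2 : o * (j : Ordinal.{u}) + g r' = H (enc l2 r') :=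
            Ordinal.add_sub_cancel_of_le (hkey r' hr').1
          rwa [← e1, ← e2, add_lt_add_iff_left] at h1
        obtain ⟨r, hr, hγr⟩ := hhard g hgdec γ hγ
        have e1 : o * (j : Ordinal.{u}) + g r = H (enc l2 r) :=
          Ordinal.add_sub_cancel_of_le (hkey r hr).1
        calc o * (j : Ordinal.{u}) + γ ≤ o * (j : Ordinal.{u}) + g r := add_le_add_right hγr _
          _ = H (enc l2 r) := e1
          _ < H (enc l p) := (hkey r hr).2
      have hconv : o * ((j + 1 : ℕ) : Ordinal.{u}) = o * (j : Ordinal.{u}) + o := by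
        push_cast
        rw [mul_add, mul_one]
      rw [hconv]
      rcases ho with h1 | hlim
      · subst h1
        have := hstep 0 zero_lt_one
        rw [add_zero] at this
        exact Order.add_one_le_iff.mpr this
      · rw [Ordinal.add_le_iff_of_isSuccLimit hlim]
        intro γ hγ
        exact (hstep γ hγ).le
  have hex : ∀ s ∈ X, ∃ m : ℕ, H (E0 s) < o * ((m : Ordinal.{u}) + 1) := by
    intro s hs
    have h1 : H (E0 s) < o * Ordinal.omega0 := hH1 _ (hE0mem s hs)
    rw [Ordinal.lt_mul_iff_of_isSuccLimit Ordinal.isSuccLimit_omega0] at h1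
    obtain ⟨c, hc, hlt⟩ := h1
    obtain ⟨m, rfl⟩ := Ordinal.lt_omega0.mp hc
    exact ⟨m, hlt.trans_le (mul_le_mul_right (le_self_add) o)⟩
  set M : List Bool → ℕ := fun s => if hs : s ∈ X then Nat.find (hex s hs) else 0 with hM
  set v : List Bool → ℕ := fun s => Nat.findGreatest (fun j => Below X j s) (M s) with hv
  refine ⟨fun s => ((v s : ℕ) : Ordinal.{u}), fun s _ => Ordinal.nat_lt_omega0 _, ?_⟩
  intro s hs t ht hpre hne
  rw [Nat.cast_lt]
  have hbt : Below X (v t) t := by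
    have h0 : Below X 0 t := trivial
    exact Nat.findGreatest_spec (P := fun j => Below X j t) (Nat.zero_le _) h0
  have hbs : Below X (v t + 1) s := ⟨t, hpre, hne, ht, hbt⟩
  have hBB : o * ((v t + 1 : ℕ) : Ordinal.{u}) ≤ H (E0 s) :=
    claimD (v t + 1) (s.map fun b => (q0, b)) q0 (hE0valid s) hq0
      (by rw [hE0snd]; exact hs) (by rw [hE0snd]; exact hbs)
  have hfind : H (E0 s) < o * ((M s : Ordinal.{u}) + 1) := by
    rw [hM]
    simp only
    rw [dif_pos hs]
    exact Nat.find_spec (hex s hs)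
  have hlt2 : ((v t + 1 : ℕ) : Ordinal.{u}) < (M s : Ordinal.{u}) + 1 :=
    (mul_lt_mul_iff_right₀ ho0).mp (hBB.trans_lt hfind)
  have hle : v t + 1 ≤ M s := by
    have : ((v t + 1 : ℕ) : Ordinal.{u}) < ((M s + 1 : ℕ) : Ordinal.{u}) := by
      push_cast
      exact_mod_cast hlt2
    have := Nat.cast_lt.mp this
    omega
  have : v t + 1 ≤ v s := Nat.le_findGreatest hle hbs
  omega


theorem Ialpha_omega0_mono {X : Set (List Bool)} (h : X ∈ Ialpha.{u} Ordinal.omega0) :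
    X ∈ Ialpha.{v} Ordinal.omega0 := by
  classical
  obtain ⟨f, h1, h2⟩ := h
  refine ⟨fun s => if h : f s < Ordinal.omega0
    then (((Ordinal.lt_omega0.mp h).choose : ℕ) : Ordinal.{v}) else 0, ?_, ?_⟩
  · intro s hs
    simp only [dif_pos (h1 s hs)]
    exact Ordinal.nat_lt_omega0 _
  · intro s hs t ht hpre hne
    have hfs := h1 s hs
    have hft := h1 t ht
    simp only [dif_pos hfs, dif_pos hft, Nat.cast_lt]
    have es := (Ordinal.lt_omega0.mp hfs).choose_spec
    have et := (Ordinal.lt_omega0.mp hft).choose_spec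
    have h3 := h2 s hs t ht hpre hne
    rw [es, et, Nat.cast_lt] at h3
    exact h3

theorem main (o : Ordinal.{u}) (ho : o = 1 ∨ Order.IsSuccLimit o)
    (F : Set (List Bool)) (q0 : List Bool) (hq0 : q0 ∈ F)
    (ρ : List Bool → Ordinal.{u}) (hρlt : ∀ p ∈ F, ρ p < o)
    (hρdec : ∀ p ∈ F, ∀ p' ∈ F, p <+: p' → p ≠ p' → ρ p' < ρ p)
    (hhard : ∀ g : List Bool → Ordinal.{u},
      (∀ p ∈ F, ∀ p' ∈ F, p <+: p' → p ≠ p' → g p' < g p) →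
      ∀ γ < o, ∃ p ∈ F, γ ≤ g p) :
    wRK (Ialpha.{u} Ordinal.omega0) (Ialpha.{u} (o * Ordinal.omega0)) := by
  refine ⟨BSet F, fMap F, BSet_infinite F q0 hq0, ?_⟩
  intro X
  rw [image_preimage]
  exact ⟨fun h => forward o F ρ hρlt hρdec X h, fun h => backward o ho F q0 hq0 hhard X h⟩

theorem card_opow_le (a : Ordinal.{u}) (h : a.card ≤ Cardinal.aleph0) :
    (Ordinal.omega0 ^ a).card ≤ Cardinal.aleph0 := by
  have key : ∀ b : Ordinal.{u}, b.card ≤ Cardinal.aleph0 →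
      Ordinal.omega0 ^ b < (Cardinal.aleph 1).ord := by
    intro b
    induction b using Ordinal.limitRecOn with
    | zero =>
      intro _
      rw [Ordinal.opow_zero, Cardinal.lt_ord, Ordinal.card_one]
      exact lt_of_le_of_lt Cardinal.one_le_aleph0 Cardinal.aleph0_lt_aleph_one
    | add_one b ih =>
      intro hb
      have hb' : b.card ≤ Cardinal.aleph0 :=
        le_trans (Ordinal.card_le_card (Order.le_succ b)) hb
      have h1 : (Ordinal.omega0 ^ b).card < Cardinal.aleph 1 := Cardinal.lt_ord.mp (ih hb')
      rw [← Cardinal.succ_aleph0, Order.lt_succ_iff] at h1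
      rw [Ordinal.opow_add_one, Cardinal.lt_ord, Ordinal.card_mul, Ordinal.card_omega0]
      calc (Ordinal.omega0 ^ b).card * Cardinal.aleph0
          ≤ Cardinal.aleph0 * Cardinal.aleph0 := mul_le_mul' h1 le_rfl
        _ = Cardinal.aleph0 := Cardinal.aleph0_mul_aleph0
        _ < Cardinal.aleph 1 := Cardinal.aleph0_lt_aleph_one
    | limit b hb ih =>
      intro hcb
      rw [Ordinal.opow_limit Ordinal.omega0_ne_zero hb]
      rw [Ordinal.iSup_Iio_eq_bsup (o := b) (f := fun (x : Ordinal.{u}) _ => Ordinal.omega0.{u} ^ x)]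
      apply Cardinal.bsup_lt_ord_of_isRegular Cardinal.isRegular_aleph_one
        (lt_of_le_of_lt hcb Cardinal.aleph0_lt_aleph_one)
      intro i hi
      exact ih i hi (le_trans (Ordinal.card_le_card hi.le) hcb)
  have h2 := Cardinal.lt_ord.mp (key a h)
  rwa [← Cardinal.succ_aleph0, Order.lt_succ_iff] at h2

end IWRK

/-- For every countable ordinal `α`, `I_ω ≤_wRK I_{ω^{α+1}}`. -/
theorem Iomega_wRK_le (α : Ordinal) (hcount : α.card ≤ Cardinal.aleph0) :
    wRK (Ialpha Ordinal.omega0) (Ialpha (Ordinal.omega0 ^ (α + 1))) := by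
  classical
  set o := Ordinal.omega0 ^ α with hoo
  have hcard : o.card ≤ Cardinal.aleph0 := IWRK.card_opow_le α hcount
  have hcnt : Countable ↥(Set.Iio o) := by
    rw [← Cardinal.mk_le_aleph0_iff, Ordinal.mk_Iio_ordinal]
    exact le_trans (Cardinal.lift_le.mpr hcard) (le_of_eq Cardinal.lift_aleph0)
  obtain ⟨ι, hι⟩ := exists_injective_nat ↥(Set.Iio o)
  have ho0 : (0 : Ordinal) < o := Ordinal.opow_pos α Ordinal.omega0_pos
  have hq0 : IWRK.codeN ι [⟨0, ho0⟩] ∈ IWRK.FF o ι :=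
    ⟨[⟨0, ho0⟩], by simp, List.isChain_singleton _, rfl⟩
  have ho : o = 1 ∨ Order.IsSuccLimit o := by
    rcases eq_or_ne α 0 with rfl | hα
    · left; simp [hoo]
    · right; exact Ordinal.isSuccLimit_opow_left Ordinal.isSuccLimit_omega0 hα
  have hmain := IWRK.main o ho (IWRK.FF o ι) (IWRK.codeN ι [⟨0, ho0⟩]) hq0
    (IWRK.rhoF o ι) (fun p hp => IWRK.rhoF_lt hι hp)
    (fun p hp p' hp' h1 h2 => IWRK.rhoF_dec hι hp hp' h1 h2)
    (fun g hg => IWRK.FF_hard hι g hg)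
  rw [Ordinal.add_one_eq_succ, Ordinal.opow_succ, ← hoo]
  obtain ⟨B', f, hinf, hiff⟩ := hmain
  exact ⟨B', f, hinf, fun X => ⟨fun h => (hiff X).mp (IWRK.Ialpha_omega0_mono h),
    fun h => IWRK.Ialpha_omega0_mono ((hiff X).mpr h)⟩⟩
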